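/- Assume F ∈ C_b²(H;H) and let {P_t} be the transition semigroup of dX = (AX + F(X))dt + Q^{1/2}dW with generator K. For λ > ω + M‖DF‖_∞, the resolvent R(λ,K) maps C_b¹(H) into C_b¹(H) and ‖D R(λ,K)f‖_{C_b(H;H)} ≤ M‖Df‖_{C_b(H;H)} / (λ − ω − M‖DF‖_{C_b(H;L(H))}) for all f ∈ C_b¹(H). -/

import Mathlib

set_option linter.unusedSectionVars false
set_option maxHeartbeats 1000000

open MeasureTheory Filter Topology
open scoped ENNReal NNReal

variable {H : Type*} [NormedAddCommGroup H] [InnerProductSpace ℝ H] [CompleteSpace H]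
  [TopologicalSpace.SeparableSpace H] [MeasurableSpace H] [BorelSpace H]

/-- The Markov semigroup `P_t φ(x) = ∫ φ(y) π_t(x, dy)` associated to transition
kernels `π`. -/
noncomputable def Pt (π : ℝ → H → Measure H) (t : ℝ) (φ : H → ℝ) (x : H) : ℝ :=
  ∫ y, φ y ∂(π t x)

/-- Membership `φ ∈ D(K)` with `K φ = g`, for the infinitesimal generator `(K, D(K))`
of the semigroup `P_t`: `φ, g` are bounded and uniformly continuous,
`(P_t φ(x) - φ(x))/t → g(x)` pointwise as `t → 0⁺`, and the difference quotients are
uniformly bounded for `t ∈ (0,1)`. -/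
def MemDomK (π : ℝ → H → Measure H) (φ g : H → ℝ) : Prop :=
  UniformContinuous φ ∧ (∃ C, ∀ x, |φ x| ≤ C) ∧
  UniformContinuous g ∧ (∃ C, ∀ x, |g x| ≤ C) ∧
  (∀ x, Tendsto (fun t => (Pt π t φ x - φ x) / t) (𝓝[>] (0:ℝ)) (𝓝 (g x))) ∧
  (∃ C, ∀ t ∈ Set.Ioo (0:ℝ) 1, ∀ x, |Pt π t φ x - φ x| / t ≤ C)

/-- Hypotheses making `π` the kernels of a stochastically continuous Markov semigroup. -/
def IsMarkovSemigroup (π : ℝ → H → Measure H) : Prop :=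
  (∀ t x, IsProbabilityMeasure (π t x)) ∧
  (∀ Γ : Set H, MeasurableSet Γ → Measurable (fun p : ℝ × H => π p.1 p.2 Γ)) ∧
  (∀ t s : ℝ, 0 ≤ t → 0 ≤ s → ∀ x, ∀ Γ : Set H, MeasurableSet Γ →
    π (t + s) x Γ = ∫⁻ y, π s y Γ ∂(π t x)) ∧
  (∀ x, π 0 x = Measure.dirac x) ∧
  (∀ φ : H → ℝ, UniformContinuous φ → (∃ C, ∀ x, |φ x| ≤ C) →
    ∀ x, ContinuousOn (fun t => Pt π t φ x) (Set.Ici 0))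

/-- `φ ∈ C_b¹(H)`: Fréchet differentiable with bounded, uniformly continuous
derivative. -/
def MemCb1 (φ : H → ℝ) : Prop :=
  Differentiable ℝ φ ∧ UniformContinuous (fun x => fderiv ℝ φ x) ∧
  ∃ C, ∀ x, ‖fderiv ℝ φ x‖ ≤ C

/-- The (Fréchet) derivative of `P_t f` as a function of the space point. -/
noncomputable def Gop (π : ℝ → H → Measure H) (f : H → ℝ) (t : ℝ) (x : H) : H →L[ℝ] ℝ :=
  fderiv ℝ (fun y => Pt π t f y) x

/-- A dense sequence in `H`. -/
noncomputable def useq (H : Type*) [NormedAddCommGroup H] [TopologicalSpace.SeparableSpace H] :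
    ℕ → H :=
  haveI : Nonempty H := ⟨0⟩
  TopologicalSpace.denseSeq H

lemma denseRange_useq (H : Type*) [NormedAddCommGroup H] [TopologicalSpace.SeparableSpace H] :
    DenseRange (useq H) :=
  haveI : Nonempty H := ⟨0⟩
  TopologicalSpace.denseRange_denseSeq H

open Classical in
/-- A measurable-in-`t` modulus of continuity for `Gop π f t` over a countable dense family. -/
noncomputable def Wmod (π : ℝ → H → Measure H) (f : H → ℝ) (t δ : ℝ) : ℝ≥0∞ :=
  ⨆ p : ℕ × ℕ × ℕ,
    if ‖useq H p.1 - useq H p.2.1‖ < δ ∧ ‖useq H p.2.2‖ < 1 then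
      (‖(Gop π f t (useq H p.1) - Gop π f t (useq H p.2.1)) (useq H p.2.2)‖₊ : ℝ≥0∞)
    else 0

lemma Wmod_mono (π : ℝ → H → Measure H) (f : H → ℝ) (t : ℝ) {a b : ℝ} (hab : a ≤ b) :
    Wmod π f t a ≤ Wmod π f t b := by
  refine iSup_mono fun p => ?_
  split_ifs with h1 h2
  · exact le_rfl
  · exact absurd ⟨h1.1.trans_le hab, h1.2⟩ h2
  · exact zero_le
  · exact le_rfl

lemma Wmod_le_of_forall (π : ℝ → H → Measure H) (f : H → ℝ) (t : ℝ) {δ ε : ℝ}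
    (h : ∀ a b : H, ‖a - b‖ < δ → ‖Gop π f t a - Gop π f t b‖ ≤ ε) :
    Wmod π f t δ ≤ ENNReal.ofReal ε := by
  refine iSup_le fun p => ?_
  split_ifs with hc
  · rw [← ENNReal.ofReal_coe_nnreal, coe_nnnorm]
    refine ENNReal.ofReal_le_ofReal ?_
    calc ‖(Gop π f t (useq H p.1) - Gop π f t (useq H p.2.1)) (useq H p.2.2)‖
        ≤ ‖Gop π f t (useq H p.1) - Gop π f t (useq H p.2.1)‖ * ‖useq H p.2.2‖ :=
          ContinuousLinearMap.le_opNorm _ _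
      _ ≤ ε * 1 := by
          refine mul_le_mul (h _ _ hc.1) hc.2.le (norm_nonneg _) ?_
          exact le_trans (norm_nonneg _) (h _ _ hc.1)
      _ = ε := mul_one ε
  · exact zero_le

lemma Wmod_le (π : ℝ → H → Measure H) (f : H → ℝ) (t : ℝ) (δ : ℝ) {B : ℝ}
    (hB : ∀ x, ‖Gop π f t x‖ ≤ B) :
    Wmod π f t δ ≤ ENNReal.ofReal (2 * B) := by
  refine Wmod_le_of_forall π f t fun a b _ => ?_
  calc ‖Gop π f t a - Gop π f t b‖ ≤ ‖Gop π f t a‖ + ‖Gop π f t b‖ := norm_sub_le _ _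
    _ ≤ B + B := add_le_add (hB a) (hB b)
    _ = 2 * B := by ring

lemma Wmod_ne_top (π : ℝ → H → Measure H) (f : H → ℝ) (t : ℝ) (δ : ℝ) {B : ℝ}
    (hB : ∀ x, ‖Gop π f t x‖ ≤ B) : Wmod π f t δ ≠ ⊤ :=
  ne_top_of_le_ne_top ENNReal.ofReal_ne_top (Wmod_le π f t δ hB)

lemma Wmod_toReal_le (π : ℝ → H → Measure H) (f : H → ℝ) (t : ℝ) (δ : ℝ) {B : ℝ}
    (hB : ∀ x, ‖Gop π f t x‖ ≤ B) : (Wmod π f t δ).toReal ≤ 2 * B := by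
  have h := Wmod_le π f t δ hB
  have hB0 : 0 ≤ B := le_trans (norm_nonneg _) (hB 0)
  calc (Wmod π f t δ).toReal ≤ (ENNReal.ofReal (2 * B)).toReal :=
        ENNReal.toReal_mono ENNReal.ofReal_ne_top h
    _ = 2 * B := ENNReal.toReal_ofReal (by linarith)
lemma Gop_sub_le_Wmod (π : ℝ → H → Measure H) (f : H → ℝ) {t δ : ℝ}
    (hUC : UniformContinuous fun x => Gop π f t x)
    {B : ℝ} (hB : ∀ x, ‖Gop π f t x‖ ≤ B)
    {x y : H} (hxy : ‖x - y‖ < δ) :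
    ‖Gop π f t x - Gop π f t y‖ ≤ 2 * (Wmod π f t δ).toReal := by
  classical
  have hW_ne : Wmod π f t δ ≠ ⊤ := Wmod_ne_top π f t δ hB
  set W := (Wmod π f t δ).toReal with hWdef
  have hW0 : 0 ≤ W := ENNReal.toReal_nonneg
  set A := Gop π f t x - Gop π f t y with hA
  have key : ∀ h : H, ‖h‖ < 1 → ‖A h‖ ≤ W := by
    intro h hh
    refine le_of_forall_pos_le_add fun ε hε => ?_
    obtain ⟨ρ, hρ0, hρ⟩ := Metric.uniformContinuous_iff.1 hUC (ε / 4) (by positivity)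
    have hγ : 0 < (δ - ‖x - y‖) / 2 := by
      have := norm_nonneg (x - y); linarith
    have hmin : 0 < min ρ ((δ - ‖x - y‖) / 2) := lt_min hρ0 hγ
    obtain ⟨i, hi⟩ := (denseRange_useq H).exists_dist_lt x hmin
    obtain ⟨j, hj⟩ := (denseRange_useq H).exists_dist_lt y hmin
    set r : ℝ := min (ε / (4 * (‖A‖ + 1))) ((1 - ‖h‖) / 2) with hr
    have hr0 : 0 < r := by
      refine lt_min (by positivity) (by linarith)
    obtain ⟨k, hk⟩ : ∃ k, useq H k ∈ Metric.ball h r ∩ Metric.ball (0 : H) 1 := by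
      refine (denseRange_useq H).exists_mem_open
        (IsOpen.inter Metric.isOpen_ball Metric.isOpen_ball) ⟨h, ?_, ?_⟩
      · exact Metric.mem_ball_self hr0
      · simpa [Metric.mem_ball, dist_zero_right] using hh
    obtain ⟨hk1, hk2⟩ := hk
    rw [Metric.mem_ball, dist_eq_norm] at hk1
    rw [Metric.mem_ball, dist_zero_right] at hk2
    have hij : ‖useq H i - useq H j‖ < δ := by
      have h1 : ‖useq H i - useq H j‖ ≤ ‖useq H i - x‖ + ‖x - y‖ + ‖y - useq H j‖ := by
        have := norm_add₃_le (a := useq H i - x) (b := x - y) (c := y - useq H j)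
        simpa using this
      have h2 : ‖useq H i - x‖ < (δ - ‖x - y‖) / 2 := by
        rw [← dist_eq_norm, dist_comm]; exact hi.trans_le (min_le_right _ _)
      have h3 : ‖y - useq H j‖ < (δ - ‖x - y‖) / 2 := by
        rw [← dist_eq_norm, dist_comm]
        rw [dist_comm] at hj
        exact hj.trans_le (min_le_right _ _)
      linarith
    have hmid : ‖(Gop π f t (useq H i) - Gop π f t (useq H j)) (useq H k)‖ ≤ W := by
      have hle : (‖(Gop π f t (useq H i) - Gop π f t (useq H j)) (useq H k)‖₊ : ℝ≥0∞) ≤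
          Wmod π f t δ := by
        have := le_iSup (fun p : ℕ × ℕ × ℕ =>
          if ‖useq H p.1 - useq H p.2.1‖ < δ ∧ ‖useq H p.2.2‖ < 1 then
            (‖(Gop π f t (useq H p.1) - Gop π f t (useq H p.2.1)) (useq H p.2.2)‖₊ : ℝ≥0∞)
          else 0) (i, j, k)
        simpa [Wmod, hij, hk2] using this
      have := ENNReal.toReal_mono hW_ne hle
      simpa using this
    have hGi : ‖Gop π f t x - Gop π f t (useq H i)‖ < ε / 4 := by
      have := hρ (a := x) (b := useq H i) (hi.trans_le (min_le_left _ _))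
      rwa [dist_eq_norm] at this
    have hGj : ‖Gop π f t (useq H j) - Gop π f t y‖ < ε / 4 := by
      have := hρ (a := y) (b := useq H j) (hj.trans_le (min_le_left _ _))
      rw [dist_eq_norm] at this
      rw [norm_sub_rev]; exact this
    have hAk : ‖A h - A (useq H k)‖ ≤ ε / 4 := by
      have h1 : ‖A h - A (useq H k)‖ ≤ ‖A‖ * ‖h - useq H k‖ := by
        rw [← map_sub]; exact ContinuousLinearMap.le_opNorm _ _
      have h2 : ‖A‖ * ‖h - useq H k‖ ≤ ‖A‖ * (ε / (4 * (‖A‖ + 1))) := by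
        refine mul_le_mul_of_nonneg_left ?_ (norm_nonneg _)
        rw [norm_sub_rev]; exact hk1.le.trans (min_le_left _ _)
      have h3 : ‖A‖ * (ε / (4 * (‖A‖ + 1))) ≤ ε / 4 := by
        have hA0 := norm_nonneg A
        have hA1 : (0:ℝ) < ‖A‖ + 1 := by positivity
        have heq : ‖A‖ * (ε / (4 * (‖A‖ + 1))) = ε / 4 * (‖A‖ / (‖A‖ + 1)) := by
          field_simp
        rw [heq]
        have hle : ‖A‖ / (‖A‖ + 1) ≤ 1 := by rw [div_le_one hA1]; linarith
        calc ε / 4 * (‖A‖ / (‖A‖ + 1)) ≤ ε / 4 * 1 :=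
              mul_le_mul_of_nonneg_left hle (by positivity)
          _ = ε / 4 := mul_one _
      linarith
    have hsplit : ‖A (useq H k)‖ ≤ ε / 4 + W + ε / 4 := by
      have hdecomp : A (useq H k) =
          (Gop π f t x - Gop π f t (useq H i)) (useq H k)
          + (Gop π f t (useq H i) - Gop π f t (useq H j)) (useq H k)
          + (Gop π f t (useq H j) - Gop π f t y) (useq H k) := by
        simp only [ContinuousLinearMap.sub_apply, hA]; ring
      rw [hdecomp]
      have e1 : ‖(Gop π f t x - Gop π f t (useq H i)) (useq H k)‖ ≤ ε / 4 := by
        refine le_trans (ContinuousLinearMap.le_opNorm _ _) ?_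
        calc ‖Gop π f t x - Gop π f t (useq H i)‖ * ‖useq H k‖ ≤ (ε/4) * 1 :=
              mul_le_mul hGi.le hk2.le (norm_nonneg _) (by positivity)
          _ = ε / 4 := mul_one _
      have e3 : ‖(Gop π f t (useq H j) - Gop π f t y) (useq H k)‖ ≤ ε / 4 := by
        refine le_trans (ContinuousLinearMap.le_opNorm _ _) ?_
        calc ‖Gop π f t (useq H j) - Gop π f t y‖ * ‖useq H k‖ ≤ (ε/4) * 1 :=
              mul_le_mul hGj.le hk2.le (norm_nonneg _) (by positivity)
          _ = ε / 4 := mul_one _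
      calc ‖_ + _ + _‖ ≤ _ := norm_add₃_le
        _ ≤ ε / 4 + W + ε / 4 := by gcongr
    calc ‖A h‖ = ‖A h - A (useq H k) + A (useq H k)‖ := by congr 1; ring
      _ ≤ ‖A h - A (useq H k)‖ + ‖A (useq H k)‖ := norm_add_le _ _
      _ ≤ ε / 4 + (ε / 4 + W + ε / 4) := add_le_add hAk hsplit
      _ ≤ W + ε := by linarith
  refine ContinuousLinearMap.opNorm_le_bound _ (by positivity) fun h => ?_
  rcases eq_or_ne h 0 with rfl | hh
  · simp
  · have hn : 0 < ‖h‖ := norm_pos_iff.2 hh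
    have h2 : ‖(2 * ‖h‖)⁻¹ • h‖ < 1 := by
      rw [norm_smul, norm_inv, Real.norm_eq_abs, abs_of_pos (by positivity)]
      rw [inv_mul_eq_div, div_lt_one (by positivity)]
      linarith
    have hk := key _ h2
    rw [A.map_smul, norm_smul, norm_inv, Real.norm_eq_abs, abs_of_pos (by positivity),
      inv_mul_le_iff₀ (by positivity)] at hk
    calc ‖A h‖ ≤ 2 * ‖h‖ * W := hk
      _ = 2 * W * ‖h‖ := by ring
/-- for the transition semigroup of `dX = (AX + F(X))dt + Q^{1/2}dW` with
`F ∈ C_b²(H;H)`, `‖e^{tA}‖ ≤ M e^{ωt}` and `κ = ‖DF‖_∞`, the gradient estimate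
`‖D P_t f‖_∞ ≤ M e^{(ω + Mκ)t} ‖Df‖_∞` yields that for `λ > ω + M κ` (and `λ > 0`)
the resolvent `R(λ,K) f(x) = ∫_0^∞ e^{-λ t} P_t f(x) dt` maps `C_b¹(H)` into `C_b¹(H)`
with `‖D R(λ,K) f‖_∞ ≤ M ‖Df‖_∞ / (λ - (ω + M κ))`. -/
theorem resolvent_gradient_estimate
    (π : ℝ → H → Measure H) (hMarkov : IsMarkovSemigroup π)
    (M ω₀ κ : ℝ) (hM : 1 ≤ M) (hκ : 0 ≤ κ)
    (hGrad : ∀ (f : H → ℝ), UniformContinuous f → (∃ C, ∀ x, |f x| ≤ C) → MemCb1 f →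
      ∀ t : ℝ, 0 ≤ t → MemCb1 (fun x => Pt π t f x) ∧
        ∀ C : ℝ, (∀ x, ‖fderiv ℝ f x‖ ≤ C) →
          ∀ x, ‖fderiv ℝ (fun y => Pt π t f y) x‖ ≤ M * Real.exp ((ω₀ + M * κ) * t) * C)
    (lam : ℝ) (hlam0 : 0 < lam) (hlam : ω₀ + M * κ < lam)
    (f : H → ℝ) (hfU : UniformContinuous f) (hfb : ∃ C, ∀ x, |f x| ≤ C)
    (hf1 : MemCb1 f) :
    MemCb1 (fun x => ∫ t in Set.Ioi (0:ℝ), Real.exp (-lam * t) * Pt π t f x) ∧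
    ∀ C : ℝ, (∀ x, ‖fderiv ℝ f x‖ ≤ C) →
      ∀ x, ‖fderiv ℝ (fun y => ∫ t in Set.Ioi (0:ℝ),
          Real.exp (-lam * t) * Pt π t f y) x‖ ≤
        M * C / (lam - (ω₀ + M * κ)) := by
  classical
  obtain ⟨Cf, hCf⟩ := hfb
  obtain ⟨hfd, hfdu, C₀, hC₀⟩ := hf1
  set β := ω₀ + M * κ with hβdef
  have hβ : 0 < lam - β := by linarith
  have hCf0 : 0 ≤ Cf := le_trans (abs_nonneg _) (hCf 0)
  have hC₀0 : 0 ≤ C₀ := le_trans (norm_nonneg _) (hC₀ 0)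
  -- basic consequences of the gradient hypothesis
  have hPdiff : ∀ t : ℝ, 0 ≤ t → Differentiable ℝ (fun y => Pt π t f y) :=
    fun t ht => (hGrad f hfU ⟨Cf, hCf⟩ ⟨hfd, hfdu, C₀, hC₀⟩ t ht).1.1
  have hGuc : ∀ t : ℝ, 0 ≤ t → UniformContinuous (fun x => Gop π f t x) :=
    fun t ht => (hGrad f hfU ⟨Cf, hCf⟩ ⟨hfd, hfdu, C₀, hC₀⟩ t ht).1.2.1
  have hGbd : ∀ C : ℝ, (∀ x, ‖fderiv ℝ f x‖ ≤ C) → ∀ t : ℝ, 0 ≤ t → ∀ x,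
      ‖Gop π f t x‖ ≤ M * Real.exp (β * t) * C :=
    fun C hC t ht x => (hGrad f hfU ⟨Cf, hCf⟩ ⟨hfd, hfdu, C₀, hC₀⟩ t ht).2 C hC x
  have hGbd0 : ∀ t : ℝ, 0 ≤ t → ∀ x, ‖Gop π f t x‖ ≤ M * Real.exp (β * t) * C₀ :=
    hGbd C₀ hC₀
  have hPbd : ∀ (t : ℝ) (x : H), |Pt π t f x| ≤ Cf := by
    intro t x
    haveI := hMarkov.1 t x
    have := norm_integral_le_of_norm_le_const (μ := π t x) (C := Cf) (f := f)
      (Eventually.of_forall fun y => by rw [Real.norm_eq_abs]; exact hCf y)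
    simpa [Pt, measure_univ] using this
  have hPcont : ∀ x, ContinuousOn (fun t => Pt π t f x) (Set.Ici 0) :=
    hMarkov.2.2.2.2 f hfU ⟨Cf, hCf⟩
  -- measurability in t
  have hmeasP : ∀ x, AEMeasurable (fun t => Pt π t f x) (volume.restrict (Set.Ioi 0)) :=
    fun x => ContinuousOn.aemeasurable ((hPcont x).mono Set.Ioi_subset_Ici_self)
      measurableSet_Ioi
  have hmeasG : ∀ (x h : H),
      AEMeasurable (fun t => Gop π f t x h) (volume.restrict (Set.Ioi 0)) := by
    intro x h
    have hq : ∀ n : ℕ, AEMeasurable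
        (fun t => ((n:ℝ) + 1) * (Pt π t f (x + ((n:ℝ) + 1)⁻¹ • h) - Pt π t f x))
        (volume.restrict (Set.Ioi 0)) :=
      fun n => (aemeasurable_const.mul ((hmeasP _).sub (hmeasP x)))
    refine aemeasurable_of_tendsto_metrizable_ae' hq ?_
    filter_upwards [self_mem_ae_restrict measurableSet_Ioi] with t ht
    have ht0 : (0:ℝ) ≤ t := le_of_lt ht
    have hline : HasDerivAt (fun s : ℝ => x + s • h) h 0 := by
      simpa using ((hasDerivAt_id (0:ℝ)).smul_const h).const_add x
    have hF : HasFDerivAt (fun y => Pt π t f y) (Gop π f t x) ((fun s : ℝ => x + s • h) 0) := by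
      simpa [Gop] using (hPdiff t ht0 x).hasFDerivAt
    have hd : HasDerivAt (fun s : ℝ => Pt π t f (x + s • h)) (Gop π f t x h) 0 :=
      by have := hF.comp_hasDerivAt 0 hline; exact this
    have hslope := hasDerivAt_iff_tendsto_slope.1 hd
    have hseq : Tendsto (fun n : ℕ => ((n:ℝ) + 1)⁻¹) atTop (𝓝[≠] (0:ℝ)) := by
      refine tendsto_nhdsWithin_of_tendsto_nhds_of_eventually_within _ ?_ ?_
      · have := tendsto_one_div_add_atTop_nhds_zero_nat (𝕜 := ℝ)
        simpa [one_div] using this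
      · refine Eventually.of_forall fun n => ?_
        simp only [Set.mem_compl_iff, Set.mem_singleton_iff]
        positivity
    have h2 : Tendsto (fun n : ℕ =>
        slope (fun s : ℝ => Pt π t f (x + s • h)) 0 (((n:ℝ) + 1)⁻¹))
        atTop (𝓝 (Gop π f t x h)) := hslope.comp hseq
    refine h2.congr fun n => ?_
    have hn0 : ((n:ℝ) + 1) ≠ 0 := by positivity
    simp only [slope_def_field]
    rw [sub_zero, div_eq_mul_inv, inv_inv]
    simp only [zero_smul, add_zero]
    ring
  have hmeasW : ∀ δ : ℝ, AEMeasurable (fun t => Wmod π f t δ) (volume.restrict (Set.Ioi 0)) := by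
    intro δ
    unfold Wmod
    refine AEMeasurable.iSup fun p => ?_
    by_cases hc : ‖useq H p.1 - useq H p.2.1‖ < δ ∧ ‖useq H p.2.2‖ < 1
    · simp only [if_pos hc]
      have hsub : AEMeasurable (fun t => Gop π f t (useq H p.1) (useq H p.2.2)
          - Gop π f t (useq H p.2.1) (useq H p.2.2)) (volume.restrict (Set.Ioi 0)) :=
        (hmeasG _ _).sub (hmeasG _ _)
      have := hsub.nnnorm.coe_nnreal_ennreal
      simpa only [ContinuousLinearMap.sub_apply] using this
    · simp only [if_neg hc]
      exact aemeasurable_const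
  -- integrability
  have hexp_int : ∀ c : ℝ, 0 < c → IntegrableOn (fun t => Real.exp (-c * t)) (Set.Ioi 0) :=
    fun c hc => exp_neg_integrableOn_Ioi 0 hc
  have hexp_val : ∀ c : ℝ, 0 < c → (∫ t in Set.Ioi (0:ℝ), Real.exp (-c * t)) = 1 / c := by
    intro c hc
    have h1 := integral_comp_mul_right_Ioi (fun u => Real.exp (-u)) 0 hc
    simp only [zero_mul] at h1
    rw [integral_exp_neg_Ioi] at h1
    have h2 : (∫ t in Set.Ioi (0:ℝ), Real.exp (-c * t))
        = ∫ x in Set.Ioi (0:ℝ), Real.exp (-(x * c)) := by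
      congr 1; funext x; congr 1; ring
    rw [h2, h1]
    simp [one_div]
  have hprod : ∀ t : ℝ, Real.exp (-lam * t) * Real.exp (β * t) = Real.exp (-(lam - β) * t) := by
    intro t; rw [← Real.exp_add]; ring_nf
  have hι1 : ∀ x, IntegrableOn (fun t => Real.exp (-lam * t) * Pt π t f x) (Set.Ioi 0) := by
    intro x
    refine ((hexp_int lam hlam0).const_mul Cf).mono' ?_ ?_
    · exact ((by fun_prop : Continuous fun t : ℝ => Real.exp (-lam * t)).aestronglyMeasurable.mul
        (hmeasP x).aestronglyMeasurable)
    · refine Eventually.of_forall fun t => ?_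
      rw [norm_mul, Real.norm_eq_abs, Real.norm_eq_abs, abs_of_pos (Real.exp_pos _)]
      calc Real.exp (-lam * t) * |Pt π t f x| ≤ Real.exp (-lam * t) * Cf :=
            mul_le_mul_of_nonneg_left (hPbd t x) (Real.exp_pos _).le
        _ = Cf * Real.exp (-lam * t) := mul_comm _ _
  have hι2 : ∀ (x h : H),
      IntegrableOn (fun t => Real.exp (-lam * t) * Gop π f t x h) (Set.Ioi 0) := by
    intro x h
    refine ((hexp_int (lam - β) hβ).const_mul (M * C₀ * ‖h‖)).mono'
      ((by fun_prop : Continuous fun t : ℝ => Real.exp (-lam * t)).aestronglyMeasurable.mul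
        (hmeasG x h).aestronglyMeasurable) ?_
    filter_upwards [self_mem_ae_restrict measurableSet_Ioi] with t ht
    have ht0 : (0:ℝ) ≤ t := le_of_lt ht
    rw [norm_mul, Real.norm_eq_abs (Real.exp _), abs_of_pos (Real.exp_pos _)]
    have h1 : ‖Gop π f t x h‖ ≤ (M * Real.exp (β * t) * C₀) * ‖h‖ :=
      le_trans (ContinuousLinearMap.le_opNorm _ _)
        (mul_le_mul_of_nonneg_right (hGbd0 t ht0 x) (norm_nonneg _))
    calc Real.exp (-lam * t) * ‖Gop π f t x h‖
        ≤ Real.exp (-lam * t) * ((M * Real.exp (β * t) * C₀) * ‖h‖) :=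
          mul_le_mul_of_nonneg_left h1 (Real.exp_pos _).le
      _ = M * C₀ * ‖h‖ * (Real.exp (-lam * t) * Real.exp (β * t)) := by ring
      _ = M * C₀ * ‖h‖ * Real.exp (-(lam - β) * t) := by rw [hprod]
  have hι3 : ∀ δ : ℝ,
      IntegrableOn (fun t => Real.exp (-lam * t) * (Wmod π f t δ).toReal) (Set.Ioi 0) := by
    intro δ
    refine ((hexp_int (lam - β) hβ).const_mul (2 * (M * C₀))).mono'
      ((by fun_prop : Continuous fun t : ℝ => Real.exp (-lam * t)).aestronglyMeasurable.mul
        (ENNReal.measurable_toReal.comp_aemeasurable (hmeasW δ)).aestronglyMeasurable) ?_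
    filter_upwards [self_mem_ae_restrict measurableSet_Ioi] with t ht
    have ht0 : (0:ℝ) ≤ t := le_of_lt ht
    rw [norm_mul, Real.norm_eq_abs (Real.exp _), abs_of_pos (Real.exp_pos _),
      Real.norm_eq_abs, abs_of_nonneg ENNReal.toReal_nonneg]
    calc Real.exp (-lam * t) * (Wmod π f t δ).toReal
        ≤ Real.exp (-lam * t) * (2 * (M * Real.exp (β * t) * C₀)) :=
          mul_le_mul_of_nonneg_left (Wmod_toReal_le π f t δ (hGbd0 t ht0)) (Real.exp_pos _).le
      _ = 2 * (M * C₀) * (Real.exp (-lam * t) * Real.exp (β * t)) := by ring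
      _ = 2 * (M * C₀) * Real.exp (-(lam - β) * t) := by rw [hprod]
  -- the modulus Φ
  set Φ : ℝ → ℝ := fun δ => ∫ t in Set.Ioi (0:ℝ), Real.exp (-lam * t) * (Wmod π f t δ).toReal
    with hΦdef
  have hΦ0 : ∀ δ, 0 ≤ Φ δ := by
    intro δ
    refine integral_nonneg fun t => ?_
    positivity
  have hΦmono : ∀ a b : ℝ, a ≤ b → Φ a ≤ Φ b := by
    intro a b hab
    refine integral_mono_ae (hι3 a) (hι3 b) ?_
    filter_upwards [self_mem_ae_restrict measurableSet_Ioi] with t ht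
    have hfin : Wmod π f t b ≠ ⊤ := Wmod_ne_top π f t b (hGbd0 t (le_of_lt ht))
    exact mul_le_mul_of_nonneg_left
      (ENNReal.toReal_mono hfin (Wmod_mono π f t hab)) (Real.exp_pos _).le
  have hWtend : ∀ t : ℝ, 0 ≤ t →
      Tendsto (fun n : ℕ => Wmod π f t (1 / ((n:ℝ) + 1))) atTop (𝓝 0) := by
    intro t ht0
    rw [ENNReal.tendsto_atTop_zero]
    intro ε hε
    obtain ⟨ε', hε'0, hε'le⟩ : ∃ ε' : ℝ, 0 < ε' ∧ ENNReal.ofReal ε' ≤ ε := by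
      rcases eq_or_ne ε ⊤ with rfl | hne
      · exact ⟨1, one_pos, le_top⟩
      · exact ⟨ε.toReal, ENNReal.toReal_pos hε.ne' hne, by rw [ENNReal.ofReal_toReal hne]⟩
    obtain ⟨ρ, hρ0, hρ⟩ := Metric.uniformContinuous_iff.1 (hGuc t ht0) ε' hε'0
    obtain ⟨N, hN⟩ := exists_nat_one_div_lt hρ0
    refine ⟨N, fun n hn => ?_⟩
    refine le_trans (Wmod_le_of_forall π f t ?_) hε'le
    intro a b hab
    have hcast : (N:ℝ) ≤ (n:ℝ) := Nat.cast_le.2 hn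
    have hle : 1 / ((n:ℝ) + 1) ≤ 1 / ((N:ℝ) + 1) :=
      one_div_le_one_div_of_le (by positivity) (by linarith)
    have hd : dist a b < ρ := by rw [dist_eq_norm]; linarith
    have := hρ hd
    rw [dist_eq_norm] at this
    exact this.le
  have hΦtend : Tendsto (fun n : ℕ => Φ (1 / ((n:ℝ) + 1))) atTop (𝓝 0) := by
    have h0 : (0:ℝ) = ∫ (_t : ℝ) in Set.Ioi (0:ℝ), (0:ℝ) := by simp
    rw [h0]
    refine tendsto_integral_of_dominated_convergence
      (fun t => 2 * (M * C₀) * Real.exp (-(lam - β) * t)) ?_ ?_ ?_ ?_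
    · intro n
      exact ((by fun_prop : Continuous fun t : ℝ => Real.exp (-lam * t)).aestronglyMeasurable.mul
        (ENNReal.measurable_toReal.comp_aemeasurable (hmeasW _)).aestronglyMeasurable)
    · exact (hexp_int (lam - β) hβ).const_mul (2 * (M * C₀))
    · intro n
      filter_upwards [self_mem_ae_restrict measurableSet_Ioi] with t ht
      have ht0 : (0:ℝ) ≤ t := le_of_lt ht
      rw [norm_mul, Real.norm_eq_abs (Real.exp _), abs_of_pos (Real.exp_pos _),
        Real.norm_eq_abs, abs_of_nonneg ENNReal.toReal_nonneg]
      calc Real.exp (-lam * t) * (Wmod π f t (1 / ((n:ℝ) + 1))).toReal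
          ≤ Real.exp (-lam * t) * (2 * (M * Real.exp (β * t) * C₀)) :=
            mul_le_mul_of_nonneg_left (Wmod_toReal_le π f t _ (hGbd0 t ht0)) (Real.exp_pos _).le
        _ = 2 * (M * C₀) * (Real.exp (-lam * t) * Real.exp (β * t)) := by ring
        _ = 2 * (M * C₀) * Real.exp (-(lam - β) * t) := by rw [hprod]
    · filter_upwards [self_mem_ae_restrict measurableSet_Ioi] with t ht
      have ht0 : (0:ℝ) ≤ t := le_of_lt ht
      have htr : Tendsto (fun n : ℕ => (Wmod π f t (1 / ((n:ℝ) + 1))).toReal) atTop (𝓝 0) := by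
        have := (ENNReal.tendsto_toReal (a := 0) (by simp)).comp (hWtend t ht0)
        simpa [Function.comp_def] using this
      have := htr.const_mul (Real.exp (-lam * t))
      simpa using this
  have hΦsmall : ∀ ε : ℝ, 0 < ε → ∃ δ : ℝ, 0 < δ ∧ ∀ δ' : ℝ, δ' < δ → Φ δ' < ε := by
    intro ε hε
    have hev : ∀ᶠ n : ℕ in atTop, Φ (1 / ((n:ℝ) + 1)) < ε :=
      hΦtend.eventually_lt_const hε
    obtain ⟨n, hn⟩ := hev.exists
    exact ⟨1 / ((n:ℝ) + 1), by positivity,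
      fun δ' hδ' => lt_of_le_of_lt (hΦmono _ _ hδ'.le) hn⟩
  -- the candidate derivative D
  have hDbd : ∀ C : ℝ, (∀ x, ‖fderiv ℝ f x‖ ≤ C) → ∀ (x h : H),
      |∫ t in Set.Ioi (0:ℝ), Real.exp (-lam * t) * Gop π f t x h| ≤
        M * C / (lam - β) * ‖h‖ := by
    intro C hC x h
    have h1 : ‖∫ t in Set.Ioi (0:ℝ), Real.exp (-lam * t) * Gop π f t x h‖
        ≤ ∫ t in Set.Ioi (0:ℝ), M * C * ‖h‖ * Real.exp (-(lam - β) * t) := by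
      refine norm_integral_le_of_norm_le ((hexp_int (lam - β) hβ).const_mul (M * C * ‖h‖)) ?_
      filter_upwards [self_mem_ae_restrict measurableSet_Ioi] with t ht
      have ht0 : (0:ℝ) ≤ t := le_of_lt ht
      rw [norm_mul, Real.norm_eq_abs (Real.exp _), abs_of_pos (Real.exp_pos _)]
      have hb : ‖Gop π f t x h‖ ≤ (M * Real.exp (β * t) * C) * ‖h‖ :=
        le_trans (ContinuousLinearMap.le_opNorm _ _)
          (mul_le_mul_of_nonneg_right (hGbd C hC t ht0 x) (norm_nonneg _))
      calc Real.exp (-lam * t) * ‖Gop π f t x h‖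
          ≤ Real.exp (-lam * t) * ((M * Real.exp (β * t) * C) * ‖h‖) :=
            mul_le_mul_of_nonneg_left hb (Real.exp_pos _).le
        _ = M * C * ‖h‖ * (Real.exp (-lam * t) * Real.exp (β * t)) := by ring
        _ = M * C * ‖h‖ * Real.exp (-(lam - β) * t) := by rw [hprod]
    rw [integral_const_mul, hexp_val _ hβ] at h1
    rw [← Real.norm_eq_abs]
    calc ‖∫ t in Set.Ioi (0:ℝ), Real.exp (-lam * t) * Gop π f t x h‖
        ≤ M * C * ‖h‖ * (1 / (lam - β)) := h1
      _ = M * C / (lam - β) * ‖h‖ := by ring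
  obtain ⟨D, hDapply⟩ : ∃ D : H → H →L[ℝ] ℝ, ∀ (x h : H),
      D x h = ∫ t in Set.Ioi (0:ℝ), Real.exp (-lam * t) * Gop π f t x h := by
    have hadd : ∀ (x h₁ h₂ : H),
        (∫ t in Set.Ioi (0:ℝ), Real.exp (-lam * t) * Gop π f t x (h₁ + h₂))
          = (∫ t in Set.Ioi (0:ℝ), Real.exp (-lam * t) * Gop π f t x h₁)
            + ∫ t in Set.Ioi (0:ℝ), Real.exp (-lam * t) * Gop π f t x h₂ := by
      intro x h₁ h₂
      rw [← integral_add (hι2 x h₁) (hι2 x h₂)]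
      congr 1; funext t; rw [map_add]; ring
    have hsmul : ∀ (x : H) (c : ℝ) (h : H),
        (∫ t in Set.Ioi (0:ℝ), Real.exp (-lam * t) * Gop π f t x (c • h))
          = c * ∫ t in Set.Ioi (0:ℝ), Real.exp (-lam * t) * Gop π f t x h := by
      intro x c h
      rw [← integral_const_mul]
      congr 1; funext t
      rw [(Gop π f t x).map_smul]
      simp only [smul_eq_mul]; ring
    refine ⟨fun x => LinearMap.mkContinuous
      { toFun := fun h => ∫ t in Set.Ioi (0:ℝ), Real.exp (-lam * t) * Gop π f t x h
        map_add' := hadd x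
        map_smul' := fun c h => by simpa using hsmul x c h }
      (M * C₀ / (lam - β)) (fun h => by
        rw [Real.norm_eq_abs]; exact hDbd C₀ hC₀ x h), fun x h => rfl⟩
  -- mean value estimate
  have hMVT : ∀ t : ℝ, 0 ≤ t → ∀ (x h : H), h ≠ 0 →
      |Pt π t f (x + h) - Pt π t f x - Gop π f t x h| ≤
        2 * (Wmod π f t (2 * ‖h‖)).toReal * ‖h‖ := by
    intro t ht x h hh
    have hn : 0 < ‖h‖ := norm_pos_iff.2 hh
    have hconv : Convex ℝ (Metric.ball x (2 * ‖h‖)) := convex_ball x _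
    have hgd : ∀ y : H, HasFDerivAt (fun z => Pt π t f z - Gop π f t x z)
        (Gop π f t y - Gop π f t x) y := fun y =>
      HasFDerivAt.sub ((hPdiff t ht y).hasFDerivAt) (Gop π f t x).hasFDerivAt
    have hbound : ∀ y ∈ Metric.ball x (2 * ‖h‖),
        ‖fderiv ℝ (fun z => Pt π t f z - Gop π f t x z) y‖ ≤
          2 * (Wmod π f t (2 * ‖h‖)).toReal := by
      intro y hy
      rw [(hgd y).fderiv]
      refine Gop_sub_le_Wmod π f (hGuc t ht) (hGbd0 t ht) ?_
      rw [← dist_eq_norm]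
      exact Metric.mem_ball.1 hy
    have hx : x ∈ Metric.ball x (2 * ‖h‖) := Metric.mem_ball_self (by positivity)
    have hxh : x + h ∈ Metric.ball x (2 * ‖h‖) := by
      rw [Metric.mem_ball, dist_eq_norm, add_sub_cancel_left]
      linarith
    have h2 := Convex.norm_image_sub_le_of_norm_fderiv_le
      (fun y _ => (hgd y).differentiableAt) hbound hconv hx hxh
    rw [add_sub_cancel_left] at h2
    have heq : Pt π t f (x + h) - Gop π f t x (x + h) - (Pt π t f x - Gop π f t x x)
        = Pt π t f (x + h) - Pt π t f x - Gop π f t x h := by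
      rw [map_add]; ring
    rw [heq, Real.norm_eq_abs] at h2
    exact h2
  -- differentiability of the resolvent
  have hHasD : ∀ x, HasFDerivAt
      (fun y => ∫ t in Set.Ioi (0:ℝ), Real.exp (-lam * t) * Pt π t f y) (D x) x := by
    intro x
    rw [hasFDerivAt_iff_tendsto]
    have key : ∀ x' : H, ‖x' - x‖⁻¹ *
        ‖(∫ t in Set.Ioi (0:ℝ), Real.exp (-lam * t) * Pt π t f x')
          - (∫ t in Set.Ioi (0:ℝ), Real.exp (-lam * t) * Pt π t f x) - D x (x' - x)‖
        ≤ 2 * Φ (2 * ‖x' - x‖) := by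
      intro x'
      rcases eq_or_ne x' x with rfl | hne
      · simp only [sub_self, norm_zero, inv_zero, zero_mul, mul_zero]
        linarith [hΦ0 0]
      · have hh : x' - x ≠ 0 := sub_ne_zero.2 hne
        have hn : 0 < ‖x' - x‖ := norm_pos_iff.2 hh
        have hx' : x' = x + (x' - x) := by abel
        have hcomb : (∫ t in Set.Ioi (0:ℝ), Real.exp (-lam * t) * Pt π t f x')
            - (∫ t in Set.Ioi (0:ℝ), Real.exp (-lam * t) * Pt π t f x) - D x (x' - x)
            = ∫ t in Set.Ioi (0:ℝ), Real.exp (-lam * t) *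
                (Pt π t f (x + (x' - x)) - Pt π t f x - Gop π f t x (x' - x)) := by
          rw [hDapply]
          have hfun : (fun t => Real.exp (-lam * t) *
              (Pt π t f (x + (x' - x)) - Pt π t f x - Gop π f t x (x' - x)))
              = fun t => Real.exp (-lam * t) * Pt π t f x'
                  - Real.exp (-lam * t) * Pt π t f x
                  - Real.exp (-lam * t) * Gop π f t x (x' - x) := by
            funext t; rw [← hx']; ring
          have hint12 : IntegrableOn (fun t => Real.exp (-lam * t) * Pt π t f x'
              - Real.exp (-lam * t) * Pt π t f x) (Set.Ioi 0) := (hι1 x').sub (hι1 x)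
          rw [hfun, integral_sub hint12 (hι2 x (x' - x)), integral_sub (hι1 x') (hι1 x)]
        rw [hcomb]
        have hb : ‖∫ t in Set.Ioi (0:ℝ), Real.exp (-lam * t) *
            (Pt π t f (x + (x' - x)) - Pt π t f x - Gop π f t x (x' - x))‖
            ≤ ∫ t in Set.Ioi (0:ℝ), ‖x' - x‖ *
                (2 * (Real.exp (-lam * t) * (Wmod π f t (2 * ‖x' - x‖)).toReal)) := by
          refine norm_integral_le_of_norm_le
            (((hι3 (2 * ‖x' - x‖)).const_mul 2).const_mul ‖x' - x‖) ?_
          filter_upwards [self_mem_ae_restrict measurableSet_Ioi] with t ht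
          have ht0 : (0:ℝ) ≤ t := le_of_lt ht
          rw [norm_mul, Real.norm_eq_abs (Real.exp _), abs_of_pos (Real.exp_pos _),
            Real.norm_eq_abs]
          calc Real.exp (-lam * t) *
              |Pt π t f (x + (x' - x)) - Pt π t f x - Gop π f t x (x' - x)|
              ≤ Real.exp (-lam * t) *
                (2 * (Wmod π f t (2 * ‖x' - x‖)).toReal * ‖x' - x‖) :=
                mul_le_mul_of_nonneg_left (hMVT t ht0 x (x' - x) hh) (Real.exp_pos _).le
            _ = ‖x' - x‖ *
                (2 * (Real.exp (-lam * t) * (Wmod π f t (2 * ‖x' - x‖)).toReal)) := by ring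
        have hval : (∫ t in Set.Ioi (0:ℝ), ‖x' - x‖ *
            (2 * (Real.exp (-lam * t) * (Wmod π f t (2 * ‖x' - x‖)).toReal)))
            = ‖x' - x‖ * (2 * Φ (2 * ‖x' - x‖)) := by
          rw [integral_const_mul, integral_const_mul]
        rw [hval] at hb
        calc ‖x' - x‖⁻¹ * ‖∫ t in Set.Ioi (0:ℝ), Real.exp (-lam * t) *
            (Pt π t f (x + (x' - x)) - Pt π t f x - Gop π f t x (x' - x))‖
            ≤ ‖x' - x‖⁻¹ * (‖x' - x‖ * (2 * Φ (2 * ‖x' - x‖))) :=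
              mul_le_mul_of_nonneg_left hb (by positivity)
          _ = 2 * Φ (2 * ‖x' - x‖) := by field_simp
    refine squeeze_zero (fun x' => by positivity) key ?_
    rw [Metric.tendsto_nhds]
    intro ε hε
    obtain ⟨δ, hδ0, hδ⟩ := hΦsmall (ε/2) (by positivity)
    have hmem : Metric.ball x (δ/2) ∈ 𝓝 x := Metric.ball_mem_nhds _ (by positivity)
    filter_upwards [hmem] with x' hx'
    have h1 : ‖x' - x‖ < δ/2 := by rw [← dist_eq_norm]; exact Metric.mem_ball.1 hx'
    have h2 : Φ (2 * ‖x' - x‖) < ε/2 := hδ _ (by linarith)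
    rw [Real.dist_0_eq_abs, abs_of_nonneg (by linarith [hΦ0 (2 * ‖x' - x‖)])]
    linarith
  have hfderivD : ∀ x, fderiv ℝ
      (fun y => ∫ t in Set.Ioi (0:ℝ), Real.exp (-lam * t) * Pt π t f y) x = D x :=
    fun x => (hHasD x).fderiv
  -- uniform continuity of D
  have hDuc : UniformContinuous D := by
    have hDdiff : ∀ (δ : ℝ) (x y : H), ‖x - y‖ < δ → ‖D x - D y‖ ≤ 2 * Φ δ := by
      intro δ x y hxy
      refine ContinuousLinearMap.opNorm_le_bound _ (by linarith [hΦ0 δ]) fun h => ?_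
      rw [ContinuousLinearMap.sub_apply, hDapply, hDapply,
        ← integral_sub (hι2 x h) (hι2 y h)]
      have hb : ‖∫ t in Set.Ioi (0:ℝ),
          (Real.exp (-lam * t) * Gop π f t x h - Real.exp (-lam * t) * Gop π f t y h)‖
          ≤ ∫ t in Set.Ioi (0:ℝ),
              (2 * (Real.exp (-lam * t) * (Wmod π f t δ).toReal)) * ‖h‖ := by
        refine norm_integral_le_of_norm_le (((hι3 δ).const_mul 2).mul_const ‖h‖) ?_
        filter_upwards [self_mem_ae_restrict measurableSet_Ioi] with t ht
        have ht0 : (0:ℝ) ≤ t := le_of_lt ht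
        have hsub : Real.exp (-lam * t) * Gop π f t x h - Real.exp (-lam * t) * Gop π f t y h
            = Real.exp (-lam * t) * ((Gop π f t x - Gop π f t y) h) := by
          rw [ContinuousLinearMap.sub_apply]; ring
        rw [hsub, norm_mul, Real.norm_eq_abs (Real.exp _), abs_of_pos (Real.exp_pos _)]
        have h1 : ‖(Gop π f t x - Gop π f t y) h‖ ≤ (2 * (Wmod π f t δ).toReal) * ‖h‖ :=
          le_trans (ContinuousLinearMap.le_opNorm _ _)
            (mul_le_mul_of_nonneg_right
              (Gop_sub_le_Wmod π f (hGuc t ht0) (hGbd0 t ht0) hxy) (norm_nonneg _))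
        calc Real.exp (-lam * t) * ‖(Gop π f t x - Gop π f t y) h‖
            ≤ Real.exp (-lam * t) * ((2 * (Wmod π f t δ).toReal) * ‖h‖) :=
              mul_le_mul_of_nonneg_left h1 (Real.exp_pos _).le
          _ = (2 * (Real.exp (-lam * t) * (Wmod π f t δ).toReal)) * ‖h‖ := by ring
      have hval : (∫ t in Set.Ioi (0:ℝ),
          (2 * (Real.exp (-lam * t) * (Wmod π f t δ).toReal)) * ‖h‖)
          = 2 * Φ δ * ‖h‖ := by
        rw [integral_mul_const, integral_const_mul]
      rw [hval] at hb
      exact hb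
    rw [Metric.uniformContinuous_iff]
    intro ε hε
    obtain ⟨δ, hδ0, hδ⟩ := hΦsmall (ε/4) (by positivity)
    refine ⟨δ/2, by positivity, ?_⟩
    intro a b hab
    have h1 : ‖a - b‖ < δ/2 := by rw [← dist_eq_norm]; exact hab
    have h2 := hDdiff (δ/2) a b h1
    have h3 : Φ (δ/2) < ε/4 := hδ _ (by linarith)
    rw [dist_eq_norm]
    linarith
  have hrw : (fun x => fderiv ℝ
      (fun y => ∫ t in Set.Ioi (0:ℝ), Real.exp (-lam * t) * Pt π t f y) x) = D :=
    funext hfderivD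
  refine ⟨⟨fun x => (hHasD x).differentiableAt, ?_, ⟨M * C₀ / (lam - β), fun x => ?_⟩⟩, ?_⟩
  · rw [hrw]; exact hDuc
  · rw [hfderivD x]
    refine ContinuousLinearMap.opNorm_le_bound _
      (div_nonneg (mul_nonneg (by linarith) hC₀0) hβ.le) fun h => ?_
    rw [hDapply, Real.norm_eq_abs]
    exact hDbd C₀ hC₀ x h
  · intro C hC x
    rw [hfderivD x]
    have hC0 : 0 ≤ C := le_trans (norm_nonneg _) (hC 0)
    refine ContinuousLinearMap.opNorm_le_bound _
      (div_nonneg (mul_nonneg (by linarith) hC0) hβ.le) fun h => ?_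
    rw [hDapply, Real.norm_eq_abs]
    exact hDbd C hC x h
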